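/- For every z ∈ ℂ, there exist w₁, w₂ ∈ ℂ with w₁ ≠ w₂, w₁³ − 3w₁ + 2·exp(z) = 0, w₂³ − 3w₂ + 2·exp(z) = 0, and Re(w₁) = Re(w₂), if and only if Re(z) > 0 and Im(z) = k·π for some integer k. (Thus for the analytic curve w³ − 3w + 2e^z = 0 the set B⁺ of points over which two distinct branches have equal real parts is a union of horizontal rays.) -/

import Mathlib

/-- For `1 < t` there is `a > 1` with `4a³ − 3a = t` (intermediate value theorem). -/
lemma aux_surj (t : ℝ) (ht : 1 < t) : ∃ a : ℝ, 1 < a ∧ 4 * a ^ 3 - 3 * a = t := by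
  have hcont : ContinuousOn (fun a : ℝ => 4 * a ^ 3 - 3 * a) (Set.Icc 1 t) := by
    fun_prop
  have hmem : t ∈ Set.Icc ((fun a : ℝ => 4 * a ^ 3 - 3 * a) 1)
      ((fun a : ℝ => 4 * a ^ 3 - 3 * a) t) := by
    have h1 : 0 < t := by linarith
    have h2 : 0 < t ^ 2 - 1 := by nlinarith
    constructor <;> simp only <;> nlinarith [mul_pos h1 h2]
  obtain ⟨a, ha, hfa⟩ := intermediate_value_Icc (le_of_lt ht) hcont hmem
  refine ⟨a, ?_, hfa⟩
  rcases lt_or_eq_of_le ha.1 with h | h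
  · exact h
  · exfalso; simp only [← h] at hfa; nlinarith

/-- For `1 < s²` there is `a` with `a² > 1` and `4a³ − 3a = s`. -/
lemma aux_surj' (s : ℝ) (hs : 1 < s ^ 2) : ∃ a : ℝ, 1 < a ^ 2 ∧ 4 * a ^ 3 - 3 * a = s := by
  rcases lt_trichotomy s 0 with h | h | h
  · have h1 : 1 < -s := by nlinarith
    obtain ⟨a, ha, hfa⟩ := aux_surj (-s) h1
    exact ⟨-a, by nlinarith, by ring_nf; linarith [hfa]⟩
  · exfalso; rw [h] at hs; norm_num at hs
  · have h1 : 1 < s := by nlinarith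
    obtain ⟨a, ha, hfa⟩ := aux_surj s h1
    exact ⟨a, by nlinarith, hfa⟩

/-- The cubic `w³ − 3w + 2eᶻ` has two distinct roots with equal real
parts iff `Re z > 0` and `Im z = kπ` for some integer `k`: the set `B⁺` of the analytic
curve `w³ − 3w + 2eᶻ = 0` is a union of horizontal rays. -/
theorem statement14 (z : ℂ) :
    (∃ w₁ w₂ : ℂ, w₁ ≠ w₂ ∧
        w₁ ^ 3 - 3 * w₁ + 2 * Complex.exp z = 0 ∧
        w₂ ^ 3 - 3 * w₂ + 2 * Complex.exp z = 0 ∧ w₁.re = w₂.re) ↔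
      (0 < z.re ∧ ∃ k : ℤ, z.im = (k : ℝ) * Real.pi) :=
  by
  constructor
  · rintro ⟨w₁, w₂, hne, h1, h2, hre⟩
    -- subtract the two equations and cancel `w₁ - w₂`
    have hfac : (w₁ - w₂) * (w₁ ^ 2 + w₁ * w₂ + w₂ ^ 2 - 3) = 0 := by
      linear_combination h1 - h2
    have key : w₁ ^ 2 + w₁ * w₂ + w₂ ^ 2 - 3 = 0 := by
      rcases mul_eq_zero.mp hfac with h | h
      · exact absurd (sub_eq_zero.mp h) hne
      · exact h
    set a := w₁.re with ha
    set b := w₁.im with hb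
    set c := w₂.im with hc
    have kre : a ^ 2 - b ^ 2 + (a * a - b * c) + (a ^ 2 - c ^ 2) - 3 = 0 := by
      have := congrArg Complex.re key
      simpa [pow_two, Complex.mul_re, Complex.mul_im, ← hre] using this
    have kim : a * b + b * a + (a * c + b * a) + (a * c + c * a) = 0 := by
      have := congrArg Complex.im key
      simpa [pow_two, Complex.mul_re, Complex.mul_im, ← hre] using this
    have habc : a * (b + c) = 0 := by linarith
    have hbne : b ≠ c := fun h => hne (Complex.ext hre h)
    have hcb : c = -b := by
      rcases mul_eq_zero.mp habc with h | h
      · exfalso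
        rw [h] at kre
        nlinarith [sq_nonneg (b + c), sq_nonneg b, sq_nonneg c]
      · linarith
    have hb0 : b ≠ 0 := by
      intro h; apply hbne; rw [h, hcb, h]; ring
    have hbsq : b ^ 2 = 3 * a ^ 2 - 3 := by
      rw [hcb] at kre; nlinarith
    have ha2 : 1 < a ^ 2 := by
      have : 0 < b ^ 2 := by positivity
      nlinarith
    -- extract real and imaginary parts of the first equation
    have hre1 : a ^ 3 - 3 * a * b ^ 2 - 3 * a + 2 * (Complex.exp z).re = 0 := by
      have := congrArg Complex.re h1
      simp only [Complex.add_re, Complex.sub_re, Complex.mul_re, Complex.mul_im,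
        Complex.zero_re, pow_succ, pow_zero, one_mul, Complex.re_ofNat,
        Complex.im_ofNat] at this
      ring_nf at this ⊢
      linarith
    have him1 : 3 * a ^ 2 * b - b ^ 3 - 3 * b + 2 * (Complex.exp z).im = 0 := by
      have := congrArg Complex.im h1
      simp only [Complex.add_im, Complex.sub_im, Complex.mul_re, Complex.mul_im,
        Complex.zero_im, pow_succ, pow_zero, one_mul, Complex.re_ofNat,
        Complex.im_ofNat] at this
      ring_nf at this ⊢
      linarith
    have heim : (Complex.exp z).im = 0 := by
      linear_combination (1 / 2 : ℝ) * him1 + (b / 2) * hbsq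
    have here : (Complex.exp z).re = 4 * a ^ 3 - 3 * a := by
      linear_combination (1 / 2 : ℝ) * hre1 + (3 * a / 2) * hbsq
    -- imaginary part: sin (Im z) = 0
    have hsin : Real.sin z.im = 0 := by
      have h := Complex.exp_im z
      rw [heim] at h
      have hpos := Real.exp_pos z.re
      rcases mul_eq_zero.mp h.symm with h' | h'
      · exact absurd h' (ne_of_gt hpos)
      · exact h'
    have hk : ∃ k : ℤ, z.im = (k : ℝ) * Real.pi := by
      obtain ⟨n, hn⟩ := Real.sin_eq_zero_iff.mp hsin
      exact ⟨n, hn.symm⟩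
    -- real part: exp (Re z) > 1
    have hcos2 : Real.cos z.im ^ 2 = 1 := by
      have := Real.sin_sq_add_cos_sq z.im
      rw [hsin] at this; nlinarith
    have hEsq : (Complex.exp z).re ^ 2 = Real.exp z.re ^ 2 := by
      rw [Complex.exp_re]; rw [mul_pow, hcos2, mul_one]
    have hgt : 1 < (Complex.exp z).re ^ 2 := by
      rw [here]
      have h1 : 0 < a ^ 2 - 1 := by linarith
      have h2 : 0 < (4 * a ^ 2 - 1) ^ 2 := by nlinarith
      nlinarith [mul_pos h1 h2]
    have hexpz : 1 < Real.exp z.re := by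
      have hpos := Real.exp_pos z.re
      nlinarith [hEsq]
    exact ⟨Real.one_lt_exp_iff.mp hexpz, hk⟩
  · rintro ⟨hre, k, hk⟩
    have heim : (Complex.exp z).im = 0 := by
      rw [Complex.exp_im, hk, Real.sin_int_mul_pi, mul_zero]
    have hcos2 : Real.cos z.im ^ 2 = 1 := by
      have h0 : Real.sin z.im = 0 := by rw [hk]; exact Real.sin_int_mul_pi k
      have := Real.sin_sq_add_cos_sq z.im
      rw [h0] at this; nlinarith
    set s := (Complex.exp z).re with hs
    have hs2 : 1 < s ^ 2 := by
      rw [hs, Complex.exp_re, mul_pow, hcos2, mul_one]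
      have : 1 < Real.exp z.re := Real.one_lt_exp_iff.mpr hre
      nlinarith
    obtain ⟨a, ha2, hfa⟩ := aux_surj' s hs2
    set b := Real.sqrt (3 * (a ^ 2 - 1)) with hbdef
    have hbsq : b ^ 2 = 3 * (a ^ 2 - 1) := Real.sq_sqrt (by nlinarith)
    have hbpos : 0 < b := Real.sqrt_pos.mpr (by nlinarith)
    have hEz : Complex.exp z = (s : ℂ) := by
      apply Complex.ext <;> simp [heim, hs]
    have hb' : ((b : ℂ)) ^ 2 = 3 * ((a : ℂ)) ^ 2 - 3 := by
      have : ((b : ℂ)) ^ 2 = ((3 * (a ^ 2 - 1) : ℝ) : ℂ) := by exact_mod_cast hbsq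
      rw [this]; push_cast; ring
    have hs' : 4 * ((a : ℂ)) ^ 3 - 3 * ((a : ℂ)) = (s : ℂ) := by exact_mod_cast hfa
    refine ⟨(a : ℂ) + (b : ℂ) * Complex.I, (a : ℂ) - (b : ℂ) * Complex.I, ?_, ?_, ?_, by simp⟩
    · intro h
      have := congrArg Complex.im h
      simp at this
      linarith
    · rw [hEz]
      linear_combination (-3 * (a : ℂ) - (b : ℂ) * Complex.I) * hb' - 2 * hs' +
        (3 * (a : ℂ) * (b : ℂ) ^ 2 + (b : ℂ) ^ 3 * Complex.I) * Complex.I_sq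
    · rw [hEz]
      linear_combination (-3 * (a : ℂ) + (b : ℂ) * Complex.I) * hb' - 2 * hs' +
        (3 * (a : ℂ) * (b : ℂ) ^ 2 - (b : ℂ) ^ 3 * Complex.I) * Complex.I_sq
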